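/- For a tree-structured distribution Q on X^d factorizing as Q(x) = Π_i Q_i(x_i) · Π_{(i,j)∈E_Q} Q_{i,j}(x_i,x_j)/(Q_i(x_i)Q_j(x_j)), and any distribution P̂ on X^d, one has D(P̂||Q) + H(P̂) ≥ Σ_{i∈V} H(P̂_i) − Σ_{(i,j)∈E_Q} I(P̂_{i,j}), with equality when the marginals of Q on nodes and edges of E_Q equal those of P̂. -/

import Mathlib

open Finset Function

set_option linter.unusedSectionVars false

namespace Stmt13

variable {X : Type*} [Fintype X] [DecidableEq X] [Nonempty X] {d : ℕ}

noncomputable def marg1 (μ : (Fin d → X) → ℝ) (i : Fin d) (a : X) : ℝ :=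
  ∑ f, if f i = a then μ f else 0

noncomputable def marg2 (μ : (Fin d → X) → ℝ) (i j : Fin d) (a b : X) : ℝ :=
  ∑ f, if f i = a ∧ f j = b then μ f else 0

variable {μ : (Fin d → X) → ℝ}

lemma marg1_nonneg (hμ : ∀ f, 0 ≤ μ f) (i : Fin d) (a : X) : 0 ≤ marg1 μ i a :=
  Finset.sum_nonneg fun f _ => by by_cases h : f i = a <;> simp [marg1, h, hμ f]

lemma marg2_nonneg (hμ : ∀ f, 0 ≤ μ f) (i j : Fin d) (a b : X) : 0 ≤ marg2 μ i j a b :=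
  Finset.sum_nonneg fun f _ => by by_cases h : f i = a ∧ f j = b <;> simp [marg2, h, hμ f]

lemma sum_marg1 (i : Fin d) : ∑ a, marg1 μ i a = ∑ f, μ f := by
  unfold marg1
  rw [Finset.sum_comm]
  refine Finset.sum_congr rfl fun f _ => ?_
  simp [Finset.sum_ite_eq]

lemma sum_marg2_right (i j : Fin d) (a : X) : ∑ b, marg2 μ i j a b = marg1 μ i a := by
  unfold marg2
  rw [Finset.sum_comm]
  refine Finset.sum_congr rfl fun f _ => ?_
  by_cases h : f i = a <;> simp [h, Finset.sum_ite_eq, marg1]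

lemma sum_marg2_left (i j : Fin d) (b : X) : ∑ a, marg2 μ i j a b = marg1 μ j b := by
  unfold marg2
  rw [Finset.sum_comm]
  refine Finset.sum_congr rfl fun f _ => ?_
  by_cases h : f j = b <;> simp [h, Finset.sum_ite_eq, marg1, and_comm]

lemma marg2_comm (i j : Fin d) (a b : X) : marg2 μ i j a b = marg2 μ j i b a := by
  unfold marg2
  exact Finset.sum_congr rfl fun f _ => if_congr and_comm rfl rfl

lemma marg2_le_marg1_left (hμ : ∀ f, 0 ≤ μ f) (i j : Fin d) (a b : X) :
    marg2 μ i j a b ≤ marg1 μ i a := by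
  refine Finset.sum_le_sum fun f _ => ?_
  by_cases h1 : f i = a
  · by_cases h2 : f j = b <;> simp [h1, h2, hμ f]
  · simp [h1]

lemma marg2_le_marg1_right (hμ : ∀ f, 0 ≤ μ f) (i j : Fin d) (a b : X) :
    marg2 μ i j a b ≤ marg1 μ j b := by
  rw [marg2_comm]; exact marg2_le_marg1_left hμ j i b a

lemma marg2_eq_zero_left (hμ : ∀ f, 0 ≤ μ f) {i j : Fin d} {a b : X}
    (h : marg1 μ i a = 0) : marg2 μ i j a b = 0 :=
  le_antisymm (h ▸ marg2_le_marg1_left hμ i j a b) (marg2_nonneg hμ i j a b)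

lemma marg2_eq_zero_right (hμ : ∀ f, 0 ≤ μ f) {i j : Fin d} {a b : X}
    (h : marg1 μ j b = 0) : marg2 μ i j a b = 0 :=
  le_antisymm (h ▸ marg2_le_marg1_right hμ i j a b) (marg2_nonneg hμ i j a b)

/-- grouping an expectation of a one-coordinate function. -/
lemma exp_one (i : Fin d) (c : X → ℝ) :
    ∑ a, marg1 μ i a * c a = ∑ f, μ f * c (f i) := by
  unfold marg1
  calc ∑ a, (∑ f, if f i = a then μ f else 0) * c a
      = ∑ a, ∑ f, (if f i = a then μ f * c a else 0) := by
        refine Finset.sum_congr rfl fun a _ => ?_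
        rw [Finset.sum_mul]
        exact Finset.sum_congr rfl fun f _ => by by_cases h : f i = a <;> simp [h]
    _ = ∑ f, ∑ a, (if f i = a then μ f * c a else 0) := Finset.sum_comm
    _ = ∑ f, μ f * c (f i) := by
        refine Finset.sum_congr rfl fun f _ => ?_
        simp [Finset.sum_ite_eq]

/-- grouping an expectation of a two-coordinate function. -/
lemma exp_two (i j : Fin d) (c : X → X → ℝ) :
    ∑ a, ∑ b, marg2 μ i j a b * c a b = ∑ f, μ f * c (f i) (f j) := by
  unfold marg2
  calc ∑ a, ∑ b, (∑ f, if f i = a ∧ f j = b then μ f else 0) * c a b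
      = ∑ a, ∑ b, ∑ f, (if f i = a ∧ f j = b then μ f * c a b else 0) := by
        refine Finset.sum_congr rfl fun a _ => Finset.sum_congr rfl fun b _ => ?_
        rw [Finset.sum_mul]
        exact Finset.sum_congr rfl fun f _ => by by_cases h : f i = a ∧ f j = b <;> simp [h]
    _ = ∑ a, ∑ f, ∑ b, (if f i = a ∧ f j = b then μ f * c a b else 0) :=
        Finset.sum_congr rfl fun a _ => Finset.sum_comm
    _ = ∑ f, ∑ a, ∑ b, (if f i = a ∧ f j = b then μ f * c a b else 0) := Finset.sum_comm
    _ = ∑ f, μ f * c (f i) (f j) := by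
        refine Finset.sum_congr rfl fun f _ => ?_
        simp [ite_and, Finset.sum_ite_eq]

/-- Gibbs' inequality. -/
lemma gibbs {ι : Type*} [Fintype ι] (p q : ι → ℝ) (hp : ∀ i, 0 ≤ p i)
    (hq : ∀ i, 0 ≤ q i) (hqp : ∀ i, q i = 0 → p i = 0) (hpsum : ∑ i, p i = 1)
    (hqsum : ∑ i, q i ≤ 1) : 0 ≤ ∑ i, p i * Real.log (p i / q i) := by
  have key : ∀ i, p i - q i ≤ p i * Real.log (p i / q i) := by
    intro i
    rcases eq_or_lt_of_le (hp i) with h0 | h0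
    · rw [← h0]; simpa using hq i
    · have hq0 : 0 < q i := lt_of_le_of_ne (hq i) fun h => by
        have := hqp i h.symm; exact absurd (this ▸ h0) (lt_irrefl 0)
      have hlog : Real.log (q i / p i) ≤ q i / p i - 1 :=
        Real.log_le_sub_one_of_pos (div_pos hq0 h0)
      have hneg : Real.log (p i / q i) = - Real.log (q i / p i) := by
        rw [← Real.log_inv, inv_div]
      rw [hneg]
      have h2 : p i * Real.log (q i / p i) ≤ p i * (q i / p i - 1) :=
        mul_le_mul_of_nonneg_left hlog (le_of_lt h0)
      have h3 : p i * (q i / p i - 1) = q i - p i := by field_simp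
      nlinarith
  calc (0:ℝ) ≤ ∑ i, (p i - q i) := by
        rw [Finset.sum_sub_distrib, hpsum]; linarith
    _ ≤ ∑ i, p i * Real.log (p i / q i) := Finset.sum_le_sum fun i _ => key i

/-- summing over an updated coordinate. -/
lemma sum_update (i : Fin d) (F : (Fin d → X) → ℝ) :
    ∑ f : Fin d → X, ∑ x : X, F (Function.update f i x)
      = (Fintype.card X : ℝ) * ∑ f, F f := by
  have hinv : Function.Involutive
      (fun p : (Fin d → X) × X => (Function.update p.1 i p.2, p.1 i)) := by
    intro p
    simp [Function.update_idem, Function.update_eq_self]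
  have key : ∑ p : (Fin d → X) × X, F (Function.update p.1 i p.2)
      = ∑ p : (Fin d → X) × X, F p.1 := by
    apply Fintype.sum_equiv hinv.toPerm
    intro p
    rfl
  have h1 : ∑ p : (Fin d → X) × X, F (Function.update p.1 i p.2)
      = ∑ f : Fin d → X, ∑ x : X, F (Function.update f i x) :=
    Fintype.sum_prod_type _
  have h2 : ∑ p : (Fin d → X) × X, F p.1 = ∑ f : Fin d → X, ∑ _x : X, F f :=
    Fintype.sum_prod_type _
  rw [← h1, key, h2]
  simp only [Finset.sum_const, Finset.card_univ, nsmul_eq_mul]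
  rw [← Finset.mul_sum]

/-- fiber count for a single coordinate. -/
lemma sum_eval (i : Fin d) (c : X → ℝ) :
    ∑ f : Fin d → X, c (f i) = (Fintype.card X : ℝ) ^ (d - 1) * ∑ a, c a := by
  have h := sum_update i (fun f => c (f i))
  simp only [Function.update_self] at h
  have h2 : ∑ f : Fin d → X, ∑ x : X, c x = (Fintype.card X : ℝ) ^ d * ∑ x, c x := by
    rw [Finset.sum_const]
    simp [Fintype.card_fun, mul_comm]
  rw [h2] at h
  have hd : 1 ≤ d := i.pos
  have hc : (0:ℝ) < (Fintype.card X : ℝ) := by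
    exact_mod_cast Fintype.card_pos
  have : (Fintype.card X : ℝ) ^ d = (Fintype.card X : ℝ) * (Fintype.card X : ℝ) ^ (d - 1) := by
    rw [← pow_succ']
    congr 1
    omega
  rw [this] at h
  have := mul_left_cancel₀ hc.ne' (by linarith [h] : (Fintype.card X : ℝ) * ∑ f : Fin d → X, c (f i) = (Fintype.card X : ℝ) * ((Fintype.card X : ℝ) ^ (d-1) * ∑ x, c x))
  exact this


section Junction

variable [NeZero d] (σ : Equiv.Perm (Fin d)) (pr : Fin d → Fin d)

/-- conditional factor attached to vertex `σ k` with parent `σ (pr k)`. -/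
noncomputable def condf (μ : (Fin d → X) → ℝ) (k : Fin d) (f : Fin d → X) : ℝ :=
  marg2 μ (σ k) (σ (pr k)) (f (σ k)) (f (σ (pr k))) / marg1 μ (σ (pr k)) (f (σ (pr k)))

/-- partially-built tree distribution: vertices `σ k` for `1 ≤ k < m` conditioned,
remaining non-root vertices uniform. -/
noncomputable def Wm (μ : (Fin d → X) → ℝ) (m : ℕ) (f : Fin d → X) : ℝ :=
  marg1 μ (σ 0) (f (σ 0)) * ∏ k ∈ univ.filter (fun k : Fin d => k ≠ 0),
    (if (k : ℕ) < m then condf σ pr μ k f else ((Fintype.card X : ℝ))⁻¹)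

variable {μ : (Fin d → X) → ℝ}

lemma condf_nonneg (hμ0 : ∀ f, 0 ≤ μ f) (k : Fin d) (f : Fin d → X) : 0 ≤ condf σ pr μ k f :=
  div_nonneg (marg2_nonneg hμ0 _ _ _ _) (marg1_nonneg hμ0 _ _)

lemma wm_nonneg (hμ0 : ∀ f, 0 ≤ μ f) (m : ℕ) (f : Fin d → X) : 0 ≤ Wm σ pr μ m f := by
  apply mul_nonneg (marg1_nonneg hμ0 _ _)
  refine Finset.prod_nonneg fun k _ => ?_
  by_cases h : (k:ℕ) < m
  · simpa [h] using condf_nonneg σ pr hμ0 k f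
  · simp [h]

lemma val_pos_of_ne_zero {k : Fin d} (hk : k ≠ 0) : 0 < (k : ℕ) := by
  rcases Nat.eq_zero_or_pos (k : ℕ) with h | h
  · exact absurd (Fin.ext (by simp [h]) : k = 0) hk
  · exact h

lemma wm_update (hpr : ∀ k, k ≠ 0 → pr k < k) (m : ℕ) (hm : 1 ≤ m) (t : Fin d) (ht : m ≤ (t:ℕ)) (f : Fin d → X) (x : X) :
    Wm σ pr μ m (Function.update f (σ t) x) = Wm σ pr μ m f := by
  unfold Wm
  have hupd : ∀ u : Fin d, u ≠ t → Function.update f (σ t) x (σ u) = f (σ u) :=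
    fun u hu => Function.update_of_ne (fun h => hu (σ.injective h)) _ _
  have ht0 : (0 : Fin d) ≠ t := by
    intro h
    have h2 : ((0 : Fin d) : ℕ) = (t : ℕ) := by rw [h]
    simp at h2
    omega
  congr 1
  · rw [hupd 0 ht0]
  · refine Finset.prod_congr rfl fun k hk => ?_
    have hk0 : k ≠ 0 := (Finset.mem_filter.mp hk).2
    by_cases hkm : (k:ℕ) < m
    · have hkt : k ≠ t := fun h => by rw [h] at hkm; omega
      have hpkt : pr k ≠ t := fun h => by
        have := hpr k hk0
        rw [Fin.lt_def] at this
        rw [h] at this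
        omega
      simp only [if_pos hkm]
      unfold condf
      rw [hupd k hkt, hupd (pr k) hpkt]
    · simp [hkm]

lemma wm_zero (hμ0 : ∀ f, 0 ≤ μ f) (m : ℕ) (j : Fin d) (hjm : (j:ℕ) < m) (f : Fin d → X)
    (hz : marg1 μ (σ j) (f (σ j)) = 0) : Wm σ pr μ m f = 0 := by
  unfold Wm
  by_cases hj0 : j = 0
  · rw [hj0] at hz; rw [hz, zero_mul]
  · apply mul_eq_zero_of_right
    apply Finset.prod_eq_zero (Finset.mem_filter.mpr ⟨Finset.mem_univ j, hj0⟩)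
    rw [if_pos hjm]
    unfold condf
    rw [marg2_eq_zero_left hμ0 hz, zero_div]

lemma wm_succ (m : ℕ) (hm : 1 ≤ m) (hmd : m < d) (f : Fin d → X) :
    Wm σ pr μ (m+1) f
      = (Fintype.card X : ℝ) * condf σ pr μ ⟨m, hmd⟩ f * Wm σ pr μ m f := by
  have hc : (Fintype.card X : ℝ) ≠ 0 := by
    have : (0:ℝ) < (Fintype.card X : ℝ) := by exact_mod_cast Fintype.card_pos
    exact this.ne'
  unfold Wm
  have hmem : (⟨m, hmd⟩ : Fin d) ∈ univ.filter (fun k : Fin d => k ≠ 0) := by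
    refine Finset.mem_filter.mpr ⟨Finset.mem_univ _, ?_⟩
    intro h
    have : ((⟨m, hmd⟩ : Fin d) : ℕ) = ((0 : Fin d) : ℕ) := by rw [h]
    simp at this
    omega
  rw [← Finset.mul_prod_erase _ _ hmem, ← Finset.mul_prod_erase _ _ hmem]
  have hprod : ∏ k ∈ (univ.filter (fun k : Fin d => k ≠ 0)).erase ⟨m,hmd⟩,
      (if (k:ℕ) < m+1 then condf σ pr μ k f else ((Fintype.card X : ℝ))⁻¹)
      = ∏ k ∈ (univ.filter (fun k : Fin d => k ≠ 0)).erase ⟨m,hmd⟩,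
      (if (k:ℕ) < m then condf σ pr μ k f else ((Fintype.card X : ℝ))⁻¹) := by
    refine Finset.prod_congr rfl fun k hk => ?_
    have hkm : (k:ℕ) ≠ m := fun h => (Finset.mem_erase.mp hk).1 (Fin.ext (by simp [h]))
    by_cases h : (k:ℕ) < m
    · rw [if_pos h, if_pos (by omega)]
    · rw [if_neg h, if_neg (by omega)]
  rw [hprod, if_pos (by simp), if_neg (by simp)]
  field_simp

lemma peel (hμ0 : ∀ f, 0 ≤ μ f) (hpr : ∀ k, k ≠ 0 → pr k < k) (m : ℕ) (hm : 1 ≤ m) (hmd : m < d) (g : (Fin d → X) → ℝ)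
    (hg : ∀ f x, g (Function.update f (σ ⟨m, hmd⟩) x) = g f) :
    ∑ f, Wm σ pr μ (m+1) f * g f = ∑ f, Wm σ pr μ m f * g f := by
  have hc : (0:ℝ) < (Fintype.card X : ℝ) := by exact_mod_cast Fintype.card_pos
  set t : Fin d := ⟨m, hmd⟩ with hts
  have htv : (t : ℕ) = m := rfl
  have htm : m ≤ (t:ℕ) := le_of_eq htv.symm
  have hpt : (pr t : ℕ) < m := by
    have h0 : t ≠ 0 := by
      intro h
      have h2 : ((t : Fin d) : ℕ) = ((0:Fin d) : ℕ) := by rw [h]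
      rw [htv, Fin.val_zero] at h2
      omega
    have h3 := hpr t h0
    rw [Fin.lt_def] at h3
    omega
  apply mul_left_cancel₀ hc.ne'
  rw [← sum_update (σ t) (fun f => Wm σ pr μ (m+1) f * g f),
      ← sum_update (σ t) (fun f => Wm σ pr μ m f * g f)]
  refine Finset.sum_congr rfl fun f _ => ?_
  have hinner : ∀ x : X, Wm σ pr μ (m+1) (Function.update f (σ t) x) * g (Function.update f (σ t) x)
      = (Fintype.card X : ℝ) * condf σ pr μ t (Function.update f (σ t) x) * Wm σ pr μ m f * g f := by
    intro x
    rw [hg, wm_succ σ pr m hm hmd, wm_update σ pr hpr m hm t htm]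
  rw [Finset.sum_congr rfl fun x _ => hinner x]
  have hinner2 : ∀ x : X, Wm σ pr μ m (Function.update f (σ t) x) * g (Function.update f (σ t) x)
      = Wm σ pr μ m f * g f := fun x => by rw [hg, wm_update σ pr hpr m hm t htm]
  rw [Finset.sum_congr rfl fun x _ => hinner2 x, Finset.sum_const]
  have hptne : pr t ≠ t := fun h => by rw [h] at hpt; omega
  have hcond : ∀ x : X, condf σ pr μ t (Function.update f (σ t) x)
      = marg2 μ (σ t) (σ (pr t)) x (f (σ (pr t))) / marg1 μ (σ (pr t)) (f (σ (pr t))) := by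
    intro x
    unfold condf
    rw [Function.update_self, Function.update_of_ne (fun h => hptne (σ.injective h))]
  have hsum : ∑ x : X, (Fintype.card X : ℝ) * condf σ pr μ t (Function.update f (σ t) x) * Wm σ pr μ m f * g f
      = (Fintype.card X : ℝ) * (Wm σ pr μ m f * (∑ x, condf σ pr μ t (Function.update f (σ t) x)) * g f) := by
    have hterm : ∀ x : X, (Fintype.card X : ℝ) * condf σ pr μ t (Function.update f (σ t) x) * Wm σ pr μ m f * g f
        = ((Fintype.card X : ℝ) * Wm σ pr μ m f * g f) * condf σ pr μ t (Function.update f (σ t) x) :=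
      fun x => by ring
    rw [Finset.sum_congr rfl fun x _ => hterm x, ← Finset.mul_sum]
    ring
  rw [hsum]
  have hchi : Wm σ pr μ m f * (∑ x, condf σ pr μ t (Function.update f (σ t) x)) = Wm σ pr μ m f := by
    rw [Finset.sum_congr rfl fun x _ => hcond x, ← Finset.sum_div,
        sum_marg2_left (μ := μ) (σ t) (σ (pr t)) (f (σ (pr t)))]
    by_cases hz : marg1 μ (σ (pr t)) (f (σ (pr t))) = 0
    · rw [wm_zero σ pr hμ0 m (pr t) hpt f hz]
      simp
    · rw [div_self hz, mul_one]
  rw [hchi]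
  simp only [nsmul_eq_mul, Finset.card_univ]

lemma chain (hμ0 : ∀ f, 0 ≤ μ f) (hpr : ∀ k, k ≠ 0 → pr k < k) (g : (Fin d → X) → ℝ) (m m' : ℕ) (h1 : 1 ≤ m') (h2 : m' ≤ m) (hd : m ≤ d)
    (hg : ∀ t : Fin d, m' ≤ (t:ℕ) → ∀ f x, g (Function.update f (σ t) x) = g f) :
    ∑ f, Wm σ pr μ m f * g f = ∑ f, Wm σ pr μ m' f * g f := by
  induction m, h2 using Nat.le_induction with
  | base => rfl
  | succ n hn ih =>
    have hnd : n < d := by omega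
    rw [peel σ pr hμ0 hpr n (by omega) hnd g (hg ⟨n, hnd⟩ (by simpa using hn))]
    exact ih (by omega)

lemma wm_one (f : Fin d → X) :
    Wm σ pr μ 1 f = marg1 μ (σ 0) (f (σ 0)) * ((Fintype.card X:ℝ))⁻¹ ^ (d-1) := by
  unfold Wm
  congr 1
  have : ∀ k ∈ univ.filter (fun k : Fin d => k ≠ 0),
      (if (k:ℕ) < 1 then condf σ pr μ k f else ((Fintype.card X : ℝ))⁻¹)
        = ((Fintype.card X : ℝ))⁻¹ := by
    intro k hk
    have := val_pos_of_ne_zero (Finset.mem_filter.mp hk).2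
    rw [if_neg (by omega)]
  rw [Finset.prod_congr rfl this, Finset.prod_const]
  congr 1
  rw [Finset.filter_ne', Finset.card_erase_of_mem (Finset.mem_univ _), Finset.card_univ,
    Fintype.card_fin]

lemma sum_wm_one (c : X → ℝ) :
    ∑ f, Wm σ pr μ 1 f * c (f (σ 0)) = ∑ a, marg1 μ (σ 0) a * c a := by
  have hc : (Fintype.card X : ℝ) ≠ 0 := by
    have : (0:ℝ) < (Fintype.card X : ℝ) := by exact_mod_cast Fintype.card_pos
    exact this.ne'
  set cc : X → ℝ := fun a => marg1 μ (σ 0) a * c a * ((Fintype.card X:ℝ))⁻¹ ^ (d-1) with hcc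
  have key : ∀ f : Fin d → X, Wm σ pr μ 1 f * c (f (σ 0)) = cc (f (σ 0)) := fun f => by
    simp only [hcc]
    rw [wm_one]
    ring
  rw [Finset.sum_congr rfl fun f _ => key f, sum_eval (σ 0) cc]
  simp only [hcc]
  rw [← Finset.sum_mul, ← mul_assoc, mul_comm ((Fintype.card X:ℝ) ^ (d-1)), mul_assoc]
  rw [inv_pow, mul_inv_cancel₀ (pow_ne_zero _ hc), mul_one]


lemma peel_at (hμ0 : ∀ f, 0 ≤ μ f) (hpr : ∀ k, k ≠ 0 → pr k < k) (j : Fin d) (hj0 : j ≠ 0)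
    (c2 : X → X → ℝ) :
    ∑ f, Wm σ pr μ ((j:ℕ)+1) f * c2 (f (σ j)) (f (σ (pr j)))
      = ∑ f, Wm σ pr μ (j:ℕ) f *
          (∑ x, condf σ pr μ j (Function.update f (σ j) x) * c2 x (f (σ (pr j)))) := by
  have hc : (0:ℝ) < (Fintype.card X : ℝ) := by exact_mod_cast Fintype.card_pos
  have hm1 : 1 ≤ (j:ℕ) := val_pos_of_ne_zero hj0
  have hmd : (j:ℕ) < d := j.isLt
  have heta : (⟨(j:ℕ), hmd⟩ : Fin d) = j := Fin.eta j hmd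
  have hpj : (pr j : ℕ) < (j:ℕ) := by have h := hpr j hj0; rwa [Fin.lt_def] at h
  have hpjne : pr j ≠ j := fun h => by rw [h] at hpj; omega
  apply mul_left_cancel₀ hc.ne'
  rw [← sum_update (σ j) (fun f => Wm σ pr μ ((j:ℕ)+1) f * c2 (f (σ j)) (f (σ (pr j)))),
      ← sum_update (σ j) (fun f => Wm σ pr μ (j:ℕ) f *
        (∑ x, condf σ pr μ j (Function.update f (σ j) x) * c2 x (f (σ (pr j)))))]
  refine Finset.sum_congr rfl fun f _ => ?_
  have hev1 : ∀ x : X, Function.update f (σ j) x (σ j) = x := fun x => Function.update_self _ _ _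
  have hev2 : ∀ x : X, Function.update f (σ j) x (σ (pr j)) = f (σ (pr j)) :=
    fun x => Function.update_of_ne (fun h => hpjne (σ.injective h)) _ _
  have hL : ∀ x : X, Wm σ pr μ ((j:ℕ)+1) (Function.update f (σ j) x)
        * c2 (Function.update f (σ j) x (σ j)) (Function.update f (σ j) x (σ (pr j)))
      = ((Fintype.card X:ℝ) * Wm σ pr μ (j:ℕ) f)
          * (condf σ pr μ j (Function.update f (σ j) x) * c2 x (f (σ (pr j)))) := by
    intro x
    have hws := wm_succ σ pr (μ := μ) (j:ℕ) hm1 hmd (Function.update f (σ j) x)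
    rw [heta] at hws
    rw [hws, wm_update σ pr hpr (j:ℕ) hm1 j (le_refl _), hev1 x, hev2 x]
    ring
  have hG : ∀ x' : X, Wm σ pr μ (j:ℕ) (Function.update f (σ j) x')
        * (∑ x, condf σ pr μ j (Function.update (Function.update f (σ j) x') (σ j) x)
            * c2 x (Function.update f (σ j) x' (σ (pr j))))
      = Wm σ pr μ (j:ℕ) f
        * (∑ x, condf σ pr μ j (Function.update f (σ j) x) * c2 x (f (σ (pr j)))) := by
    intro x'
    rw [wm_update σ pr hpr (j:ℕ) hm1 j (le_refl _), hev2 x']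
    congr 1
    refine Finset.sum_congr rfl fun x _ => ?_
    rw [Function.update_idem]
  rw [Finset.sum_congr rfl fun x _ => hL x, Finset.sum_congr rfl fun x' _ => hG x']
  rw [← Finset.mul_sum, Finset.sum_const]
  simp only [nsmul_eq_mul, Finset.card_univ]
  ring

lemma nodeMarg (hμ0 : ∀ f, 0 ≤ μ f) (hpr : ∀ k, k ≠ 0 → pr k < k) :
    ∀ n : ℕ, ∀ j : Fin d, (j:ℕ) = n → ∀ b : X,
      ∑ f, Wm σ pr μ ((j:ℕ)+1) f * (if f (σ j) = b then (1:ℝ) else 0) = marg1 μ (σ j) b := by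
  intro n
  induction n using Nat.strong_induction_on with
  | _ n ih =>
  intro j hjn b
  by_cases hj0 : j = 0
  · subst hj0
    have hv : ((0:Fin d):ℕ) = 0 := by simp
    rw [hv]
    rw [sum_wm_one σ pr (fun a => if a = b then (1:ℝ) else 0)]
    simp [mul_ite, Finset.sum_ite_eq']
  · have hm1 : 1 ≤ (j:ℕ) := val_pos_of_ne_zero hj0
    have hpj : (pr j : ℕ) < (j:ℕ) := by have h := hpr j hj0; rwa [Fin.lt_def] at h
    have hpjne : pr j ≠ j := fun h => by rw [h] at hpj; omega
    have h1 := peel_at σ pr hμ0 hpr j hj0 (fun x _ => if x = b then (1:ℝ) else 0)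
    rw [h1]
    have hinner : ∀ f : Fin d → X,
        (∑ x, condf σ pr μ j (Function.update f (σ j) x) * (if x = b then (1:ℝ) else 0))
        = marg2 μ (σ j) (σ (pr j)) b (f (σ (pr j))) / marg1 μ (σ (pr j)) (f (σ (pr j))) := by
      intro f
      rw [Finset.sum_eq_single b (fun x _ hx => by simp [hx]) (fun h => absurd (Finset.mem_univ b) h)]
      rw [if_pos rfl, mul_one]
      unfold condf
      rw [Function.update_self, Function.update_of_ne (fun h => hpjne (σ.injective h))]
    rw [Finset.sum_congr rfl fun f _ => by rw [hinner f]]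
    have hchain := chain σ pr hμ0 hpr
      (fun f => marg2 μ (σ j) (σ (pr j)) b (f (σ (pr j))) / marg1 μ (σ (pr j)) (f (σ (pr j))))
      (j:ℕ) ((pr j:ℕ)+1) (by omega) (by omega) (le_of_lt j.isLt)
      (fun t ht f x => by
        have htne : pr j ≠ t := fun h => by rw [← h] at ht; omega
        rw [Function.update_of_ne (fun h => htne (σ.injective h)) x f])
    rw [hchain]
    have hptw : ∀ f : Fin d → X,
        Wm σ pr μ ((pr j:ℕ)+1) f *
          (marg2 μ (σ j) (σ (pr j)) b (f (σ (pr j))) / marg1 μ (σ (pr j)) (f (σ (pr j))))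
        = ∑ c, (Wm σ pr μ ((pr j:ℕ)+1) f * (if f (σ (pr j)) = c then (1:ℝ) else 0))
            * (marg2 μ (σ j) (σ (pr j)) b c / marg1 μ (σ (pr j)) c) := by
      intro f
      rw [Finset.sum_eq_single (f (σ (pr j)))
        (fun x _ hx => by simp [Ne.symm hx]) (fun h => absurd (Finset.mem_univ _) h)]
      simp
    rw [Finset.sum_congr rfl fun f _ => hptw f, Finset.sum_comm]
    have hih : ∀ c, ∑ f, Wm σ pr μ ((pr j:ℕ)+1) f * (if f (σ (pr j)) = c then (1:ℝ) else 0)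
        = marg1 μ (σ (pr j)) c :=
      fun c => ih (pr j:ℕ) (by omega) (pr j) rfl c
    have hcg : ∀ c : X,
        (∑ f, (Wm σ pr μ ((pr j:ℕ)+1) f * (if f (σ (pr j)) = c then (1:ℝ) else 0))
          * (marg2 μ (σ j) (σ (pr j)) b c / marg1 μ (σ (pr j)) c))
        = marg2 μ (σ j) (σ (pr j)) b c := by
      intro c
      rw [← Finset.sum_mul, hih c]
      by_cases hz : marg1 μ (σ (pr j)) c = 0
      · rw [hz, marg2_eq_zero_right hμ0 hz]
        simp
      · field_simp
    rw [Finset.sum_congr rfl fun c _ => hcg c, sum_marg2_right]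

lemma edgeMarg (hμ0 : ∀ f, 0 ≤ μ f) (hpr : ∀ k, k ≠ 0 → pr k < k) (k : Fin d) (hk0 : k ≠ 0)
    (a b : X) :
    ∑ f, Wm σ pr μ ((k:ℕ)+1) f * (if f (σ k) = a ∧ f (σ (pr k)) = b then (1:ℝ) else 0)
      = marg2 μ (σ k) (σ (pr k)) a b := by
  have hpj : (pr k : ℕ) < (k:ℕ) := by have h := hpr k hk0; rwa [Fin.lt_def] at h
  have hpjne : pr k ≠ k := fun h => by rw [h] at hpj; omega
  have h1 := peel_at σ pr hμ0 hpr k hk0 (fun x y => if x = a ∧ y = b then (1:ℝ) else 0)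
  rw [h1]
  have hinner : ∀ f : Fin d → X,
      (∑ x, condf σ pr μ k (Function.update f (σ k) x)
        * (if x = a ∧ f (σ (pr k)) = b then (1:ℝ) else 0))
      = (if f (σ (pr k)) = b then (1:ℝ) else 0)
          * (marg2 μ (σ k) (σ (pr k)) a b / marg1 μ (σ (pr k)) b) := by
    intro f
    rw [Finset.sum_eq_single a (fun x _ hx => by simp [hx]) (fun h => absurd (Finset.mem_univ a) h)]
    by_cases hb : f (σ (pr k)) = b
    · rw [if_pos ⟨rfl, hb⟩, if_pos hb, mul_one, one_mul]
      unfold condf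
      rw [Function.update_self, Function.update_of_ne (fun h => hpjne (σ.injective h)), hb]
    · rw [if_neg (fun h => hb h.2), if_neg hb, mul_zero, zero_mul]
  rw [Finset.sum_congr rfl fun f _ => by rw [hinner f]]
  have hchain := chain σ pr hμ0 hpr
    (fun f => (if f (σ (pr k)) = b then (1:ℝ) else 0)
        * (marg2 μ (σ k) (σ (pr k)) a b / marg1 μ (σ (pr k)) b))
    (k:ℕ) ((pr k:ℕ)+1) (by omega) (by omega) (le_of_lt k.isLt)
    (fun t ht f x => by
      have htne : pr k ≠ t := fun h => by rw [← h] at ht; omega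
      rw [Function.update_of_ne (fun h => htne (σ.injective h)) x f])
  rw [hchain]
  have hregroup : ∀ f : Fin d → X,
      Wm σ pr μ ((pr k:ℕ)+1) f * ((if f (σ (pr k)) = b then (1:ℝ) else 0)
        * (marg2 μ (σ k) (σ (pr k)) a b / marg1 μ (σ (pr k)) b))
      = (Wm σ pr μ ((pr k:ℕ)+1) f * (if f (σ (pr k)) = b then (1:ℝ) else 0))
        * (marg2 μ (σ k) (σ (pr k)) a b / marg1 μ (σ (pr k)) b) := fun f => by ring
  rw [Finset.sum_congr rfl fun f _ => hregroup f, ← Finset.sum_mul,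
    nodeMarg σ pr hμ0 hpr (pr k:ℕ) (pr k) rfl b]
  by_cases hz : marg1 μ (σ (pr k)) b = 0
  · rw [hz, marg2_eq_zero_right hμ0 hz]
    simp
  · field_simp

lemma junction_sum (hμ0 : ∀ f, 0 ≤ μ f) (hpr : ∀ k, k ≠ 0 → pr k < k)
    (hμ1 : ∑ f, μ f = 1) : ∑ f, Wm σ pr μ d f = 1 := by
  have hd1 : 1 ≤ d := Nat.pos_of_ne_zero (NeZero.ne d)
  have h := chain σ pr hμ0 hpr (fun _ => (1:ℝ)) d 1 le_rfl hd1 le_rfl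
    (fun _ _ _ _ => rfl)
  simp only [mul_one] at h
  rw [h]
  have h2 := sum_wm_one σ pr (μ := μ) (fun _ => (1:ℝ))
  simp only [mul_one] at h2
  rw [h2, sum_marg1, hμ1]

lemma junction_node (hμ0 : ∀ f, 0 ≤ μ f) (hpr : ∀ k, k ≠ 0 → pr k < k)
    (i : Fin d) (b : X) : marg1 (Wm σ pr μ d) i b = marg1 μ i b := by
  have hij : σ (σ.symm i) = i := Equiv.apply_symm_apply σ i
  set j := σ.symm i with hj
  have hconv : marg1 (Wm σ pr μ d) i b
      = ∑ f, Wm σ pr μ d f * (if f (σ j) = b then (1:ℝ) else 0) := by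
    unfold marg1
    refine Finset.sum_congr rfl fun f _ => ?_
    rw [hij]
    by_cases h : f i = b <;> simp [h]
  rw [hconv]
  have hchain := chain σ pr hμ0 hpr (fun f => if f (σ j) = b then (1:ℝ) else 0)
    d ((j:ℕ)+1) (by omega) (by have := j.isLt; omega) le_rfl
    (fun t ht f x => by
      have htne : j ≠ t := fun h => by rw [← h] at ht; omega
      rw [Function.update_of_ne (fun h => htne (σ.injective h)) x f])
  rw [hchain, nodeMarg σ pr hμ0 hpr (j:ℕ) j rfl b, hij]

lemma junction_edge (hμ0 : ∀ f, 0 ≤ μ f) (hpr : ∀ k, k ≠ 0 → pr k < k)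
    (k : Fin d) (hk0 : k ≠ 0) (a b : X) :
    marg2 (Wm σ pr μ d) (σ k) (σ (pr k)) a b = marg2 μ (σ k) (σ (pr k)) a b := by
  have hconv : marg2 (Wm σ pr μ d) (σ k) (σ (pr k)) a b
      = ∑ f, Wm σ pr μ d f * (if f (σ k) = a ∧ f (σ (pr k)) = b then (1:ℝ) else 0) := by
    unfold marg2
    refine Finset.sum_congr rfl fun f _ => ?_
    by_cases h : f (σ k) = a ∧ f (σ (pr k)) = b <;> simp [h]
  rw [hconv]
  have hpj : (pr k : ℕ) < (k:ℕ) := by have h := hpr k hk0; rwa [Fin.lt_def] at h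
  have hchain := chain σ pr hμ0 hpr
    (fun f => if f (σ k) = a ∧ f (σ (pr k)) = b then (1:ℝ) else 0)
    d ((k:ℕ)+1) (by omega) (by have := k.isLt; omega) le_rfl
    (fun t ht f x => by
      have hpj2 : (pr k : ℕ) < (k:ℕ) := by have h := hpr k hk0; rwa [Fin.lt_def] at h
      have htne1 : k ≠ t := fun h => by rw [← h] at ht; omega
      have htne2 : pr k ≠ t := fun h => by rw [← h] at ht; omega
      rw [Function.update_of_ne (fun h => htne1 (σ.injective h)) x f,
        Function.update_of_ne (fun h => htne2 (σ.injective h)) x f])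
  rw [hchain, edgeMarg σ pr hμ0 hpr k hk0 a b]

end Junction


section Graph

variable {V : Type*} [DecidableEq V] {G : SimpleGraph V}

lemma walk_support_dist_le {r a w : V} (p : G.Walk r a) (hw : w ∈ p.support) :
    G.dist r w ≤ p.length :=
  le_trans (SimpleGraph.dist_le _) (SimpleGraph.Walk.length_takeUntil_le p hw)

lemma exists_lower_neighbor (hc : G.Connected) {r v : V} (hvr : v ≠ r) :
    ∃ u, G.Adj u v ∧ G.dist r u + 1 = G.dist r v := by
  have hne : G.dist r v ≠ 0 := (hc.pos_dist_of_ne (Ne.symm hvr)).ne'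
  obtain ⟨p, hp⟩ := SimpleGraph.exists_walk_of_dist_ne_zero hne
  have hnil : ¬ p.reverse.Nil := by
    rw [SimpleGraph.Walk.not_nil_iff_lt_length, SimpleGraph.Walk.length_reverse, hp]
    omega
  obtain ⟨u, h, q, hq⟩ := SimpleGraph.Walk.not_nil_iff.mp hnil
  have hlen : q.length + 1 = G.dist r v := by
    have h2 := congrArg SimpleGraph.Walk.length hq
    rw [SimpleGraph.Walk.length_reverse, hp] at h2
    rw [SimpleGraph.Walk.length_cons] at h2
    omega
  have hle : G.dist r u ≤ q.length := by
    have h3 := SimpleGraph.dist_le q.reverse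
    rwa [SimpleGraph.Walk.length_reverse] at h3
  have htri : G.dist r v ≤ G.dist r u + G.dist u v := hc.dist_triangle
  have hd1 : G.dist u v = 1 := SimpleGraph.dist_eq_one_iff_adj.mpr h.symm
  exact ⟨u, h.symm, by omega⟩

lemma isPath_concat {r a b : V} {p : G.Walk r a} (hp : p.IsPath) (hab : G.Adj a b)
    (hbs : b ∉ p.support) : (p.concat hab).IsPath := by
  apply (SimpleGraph.Walk.isPath_reverse_iff _).mp
  rw [SimpleGraph.Walk.reverse_concat]
  refine SimpleGraph.Walk.IsPath.cons hp.reverse ?_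
  rw [SimpleGraph.Walk.support_reverse, List.mem_reverse]
  exact hbs

lemma no_same_level (hG : G.IsTree) (r : V) {a b : V} (hab : G.Adj a b) :
    G.dist r a ≠ G.dist r b := by
  intro heq
  have hc := hG.isConnected
  obtain ⟨p, hp, hlen⟩ := (hc.preconnected r a).exists_path_of_dist
  have hbs : b ∉ p.support := by
    intro hbs
    have hone : G.dist r b ≤ (p.takeUntil b hbs).length := SimpleGraph.dist_le _
    have hsplit := congrArg SimpleGraph.Walk.length (p.take_spec hbs)
    rw [SimpleGraph.Walk.length_append] at hsplit
    have hdnz : (p.dropUntil b hbs).length ≠ 0 := by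
      intro h0
      have hba : b = a := SimpleGraph.Walk.eq_of_length_eq_zero h0
      exact hab.ne hba.symm
    omega
  have hq : (p.concat hab).IsPath := isPath_concat hp hab hbs
  obtain ⟨p', hp', hlen'⟩ := (hc.preconnected r b).exists_path_of_dist
  have huniq := (hG.existsUnique_path r b).unique hq hp'
  have hcl := congrArg SimpleGraph.Walk.length huniq
  rw [SimpleGraph.Walk.length_concat, hlen', hlen] at hcl
  omega

lemma unique_lower (hG : G.IsTree) (r : V) {b u₁ u₂ : V} (h1 : G.Adj u₁ b) (h2 : G.Adj u₂ b)
    (l1 : G.dist r u₁ + 1 = G.dist r b) (l2 : G.dist r u₂ + 1 = G.dist r b) : u₁ = u₂ := by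
  have hc := hG.isConnected
  obtain ⟨p₁, hp₁, hl₁⟩ := (hc.preconnected r u₁).exists_path_of_dist
  obtain ⟨p₂, hp₂, hl₂⟩ := (hc.preconnected r u₂).exists_path_of_dist
  have hbs₁ : b ∉ p₁.support := fun hbs => by
    have := walk_support_dist_le p₁ hbs
    omega
  have hbs₂ : b ∉ p₂.support := fun hbs => by
    have := walk_support_dist_le p₂ hbs
    omega
  have hq₁ : (p₁.concat h1).IsPath := isPath_concat hp₁ h1 hbs₁
  have hq₂ : (p₂.concat h2).IsPath := isPath_concat hp₂ h2 hbs₂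
  have huniq := (hG.existsUnique_path r b).unique hq₁ hq₂
  have e1 : (p₁.concat h1).reverse.getVert 1 = u₁ := by
    rw [SimpleGraph.Walk.reverse_concat]
    simp [SimpleGraph.Walk.getVert_cons_succ]
  have e2 : (p₂.concat h2).reverse.getVert 1 = u₂ := by
    rw [SimpleGraph.Walk.reverse_concat]
    simp [SimpleGraph.Walk.getVert_cons_succ]
  rw [← e1, ← e2, huniq]

end Graph


section MI

variable {μ : (Fin d → X) → ℝ}

lemma sum_mul_log_div {ι : Type*} [Fintype ι] (w q : ι → ℝ) (hw0 : ∀ i, 0 ≤ w i)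
    (hq : ∀ i, w i ≠ 0 → q i ≠ 0) :
    ∑ i, w i * Real.log (w i / q i)
      = (∑ i, w i * Real.log (w i)) - ∑ i, w i * Real.log (q i) := by
  rw [← Finset.sum_sub_distrib]
  refine Finset.sum_congr rfl fun i _ => ?_
  by_cases h0 : w i = 0
  · simp [h0]
  · rw [Real.log_div h0 (hq i h0)]
    ring

lemma mi_split2 (hμ0 : ∀ f, 0 ≤ μ f) (i j : Fin d) :
    ∑ a, ∑ b, marg2 μ i j a b * Real.log (marg2 μ i j a b / (marg1 μ i a * marg1 μ j b))
      = (∑ a, ∑ b, marg2 μ i j a b * Real.log (marg2 μ i j a b))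
        - (∑ a, marg1 μ i a * Real.log (marg1 μ i a))
        - (∑ b, marg1 μ j b * Real.log (marg1 μ j b)) := by
  have key : ∀ a b, marg2 μ i j a b * Real.log (marg2 μ i j a b / (marg1 μ i a * marg1 μ j b))
      = marg2 μ i j a b * Real.log (marg2 μ i j a b)
        - marg2 μ i j a b * Real.log (marg1 μ i a)
        - marg2 μ i j a b * Real.log (marg1 μ j b) := by
    intro a b
    by_cases h0 : marg2 μ i j a b = 0
    · simp [h0]
    · have hpos : 0 < marg2 μ i j a b := lt_of_le_of_ne (marg2_nonneg hμ0 i j a b) (Ne.symm h0)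
      have h1 : marg1 μ i a ≠ 0 :=
        (lt_of_lt_of_le hpos (marg2_le_marg1_left hμ0 i j a b)).ne'
      have h2 : marg1 μ j b ≠ 0 :=
        (lt_of_lt_of_le hpos (marg2_le_marg1_right hμ0 i j a b)).ne'
      rw [Real.log_div h0 (mul_ne_zero h1 h2), Real.log_mul h1 h2]
      ring
  calc ∑ a, ∑ b, marg2 μ i j a b * Real.log (marg2 μ i j a b / (marg1 μ i a * marg1 μ j b))
      = ∑ a, ∑ b, (marg2 μ i j a b * Real.log (marg2 μ i j a b)
          - marg2 μ i j a b * Real.log (marg1 μ i a)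
          - marg2 μ i j a b * Real.log (marg1 μ j b)) := by
        exact Finset.sum_congr rfl fun a _ => Finset.sum_congr rfl fun b _ => key a b
    _ = (∑ a, ∑ b, marg2 μ i j a b * Real.log (marg2 μ i j a b))
        - (∑ a, ∑ b, marg2 μ i j a b * Real.log (marg1 μ i a))
        - (∑ a, ∑ b, marg2 μ i j a b * Real.log (marg1 μ j b)) := by
        rw [← Finset.sum_sub_distrib, ← Finset.sum_sub_distrib]
        exact Finset.sum_congr rfl fun a _ => by
          rw [← Finset.sum_sub_distrib, ← Finset.sum_sub_distrib]
    _ = (∑ a, ∑ b, marg2 μ i j a b * Real.log (marg2 μ i j a b))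
        - (∑ a, marg1 μ i a * Real.log (marg1 μ i a))
        - (∑ b, marg1 μ j b * Real.log (marg1 μ j b)) := by
        congr 1
        · congr 1
          refine Finset.sum_congr rfl fun a _ => ?_
          rw [← Finset.sum_mul, sum_marg2_right]
        · rw [Finset.sum_comm]
          refine Finset.sum_congr rfl fun b _ => ?_
          rw [← Finset.sum_mul, sum_marg2_left]

lemma mi_nonneg (hμ0 : ∀ f, 0 ≤ μ f) (hμ1 : ∑ f, μ f = 1) (i j : Fin d) :
    0 ≤ ∑ a, ∑ b, marg2 μ i j a b * Real.log (marg2 μ i j a b / (marg1 μ i a * marg1 μ j b)) := by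
  have h := gibbs (fun ab : X × X => marg2 μ i j ab.1 ab.2)
    (fun ab : X × X => marg1 μ i ab.1 * marg1 μ j ab.2)
    (fun ab => marg2_nonneg hμ0 i j ab.1 ab.2)
    (fun ab => mul_nonneg (marg1_nonneg hμ0 i ab.1) (marg1_nonneg hμ0 j ab.2))
    (fun ab hz => by
      rcases mul_eq_zero.mp hz with h1 | h1
      · exact marg2_eq_zero_left hμ0 h1
      · exact marg2_eq_zero_right hμ0 h1)
    (by
      rw [Fintype.sum_prod_type]
      calc ∑ a, ∑ b, marg2 μ i j a b = ∑ a, marg1 μ i a :=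
            Finset.sum_congr rfl fun a _ => sum_marg2_right i j a
        _ = 1 := by rw [sum_marg1, hμ1])
    (le_of_eq (by
      rw [Fintype.sum_prod_type]
      calc ∑ a, ∑ b, marg1 μ i a * marg1 μ j b
          = ∑ a, marg1 μ i a * ∑ b, marg1 μ j b := by
            exact Finset.sum_congr rfl fun a _ => (Finset.mul_sum _ _ _).symm
        _ = 1 := by
            rw [sum_marg1, hμ1, ← Finset.sum_mul, sum_marg1, hμ1, one_mul]))
  rwa [Fintype.sum_prod_type] at h

lemma n2_symm (i j : Fin d) (g : ℝ → ℝ) :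
    ∑ a, ∑ b, marg2 μ i j a b * g (marg2 μ i j a b)
      = ∑ a, ∑ b, marg2 μ j i a b * g (marg2 μ j i a b) := by
  rw [Finset.sum_comm]
  exact Finset.sum_congr rfl fun b _ => Finset.sum_congr rfl fun a _ => by
    rw [marg2_comm]

end MI

section WLog

variable [NeZero d] (σ : Equiv.Perm (Fin d)) (pr : Fin d → Fin d) {μ : (Fin d → X) → ℝ}

lemma wm_log_expand (hμ0 : ∀ f, 0 ≤ μ f) (f : Fin d → X) :
    Wm σ pr μ d f * Real.log (Wm σ pr μ d f)
      = Wm σ pr μ d f * (Real.log (marg1 μ (σ 0) (f (σ 0)))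
          + ∑ k ∈ univ.filter (fun k : Fin d => k ≠ 0),
              (Real.log (marg2 μ (σ k) (σ (pr k)) (f (σ k)) (f (σ (pr k))))
                - Real.log (marg1 μ (σ (pr k)) (f (σ (pr k)))))) := by
  rcases eq_or_lt_of_le (wm_nonneg σ pr hμ0 d f) with h0 | h0
  · rw [← h0, zero_mul, zero_mul]
  · congr 1
    have hexp : Wm σ pr μ d f = marg1 μ (σ 0) (f (σ 0))
        * ∏ k ∈ univ.filter (fun k : Fin d => k ≠ 0), condf σ pr μ k f := by
      unfold Wm
      congr 1
      exact Finset.prod_congr rfl fun k _ => if_pos k.isLt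
    rw [hexp] at h0 ⊢
    have hAne : marg1 μ (σ 0) (f (σ 0)) ≠ 0 := by
      intro h
      rw [h, zero_mul] at h0
      exact lt_irrefl 0 h0
    have hPne : (∏ k ∈ univ.filter (fun k : Fin d => k ≠ 0), condf σ pr μ k f) ≠ 0 := by
      intro h
      rw [h, mul_zero] at h0
      exact lt_irrefl 0 h0
    rw [Real.log_mul hAne hPne, Real.log_prod (fun k hk => Finset.prod_ne_zero_iff.mp hPne k hk)]
    congr 1
    refine Finset.sum_congr rfl fun k hk => ?_
    have hfne : condf σ pr μ k f ≠ 0 := Finset.prod_ne_zero_iff.mp hPne k hk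
    have hnum : marg2 μ (σ k) (σ (pr k)) (f (σ k)) (f (σ (pr k))) ≠ 0 := by
      intro h
      exact hfne (by unfold condf; rw [h, zero_div])
    have hden : marg1 μ (σ (pr k)) (f (σ (pr k))) ≠ 0 := by
      intro h
      exact hfne (by unfold condf; rw [h, div_zero])
    unfold condf
    rw [Real.log_div hnum hden]

end WLog

end Stmt13

section Main
open Stmt13 Finset Function

/-- For a tree-structured distribution `Q` factorizing over a spanning tree with edge set `E`,
and any distribution `P̂`, one has
`D(P̂‖Q) + H(P̂) ≥ Σ_i H(P̂_i) − Σ_{(i,j)∈E} I(P̂_{i,j})`, with equality when the node and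
edge marginals of `Q` equal those of `P̂`. -/
theorem stmt_13 {X : Type*} [Fintype X] [DecidableEq X] [Nonempty X] (d : ℕ)
    (E : Finset (Fin d × Fin d)) (hE : ∀ p ∈ E, p.1 ≠ p.2)
    (htree : (SimpleGraph.fromEdgeSet
      ((fun p : Fin d × Fin d => s(p.1, p.2)) '' ↑E)).IsTree)
    (Q Phat : (Fin d → X) → ℝ)
    (hQpos : ∀ f, 0 < Q f) (hQsum : ∑ f, Q f = 1)
    (hPnn : ∀ f, 0 ≤ Phat f) (hPsum : ∑ f, Phat f = 1) :
    let Qi : Fin d → X → ℝ := fun i a => ∑ f, if f i = a then Q f else 0;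
    let Qij : Fin d → Fin d → X → X → ℝ :=
      fun i j a b => ∑ f, if f i = a ∧ f j = b then Q f else 0;
    let Pi : Fin d → X → ℝ := fun i a => ∑ f, if f i = a then Phat f else 0;
    let Pij : Fin d → Fin d → X → X → ℝ :=
      fun i j a b => ∑ f, if f i = a ∧ f j = b then Phat f else 0;
    let H : (X → ℝ) → ℝ := fun r => -∑ a, r a * Real.log (r a);
    let MI2 : (X → X → ℝ) → ℝ := fun R =>
      ∑ a, ∑ b, R a b * Real.log (R a b / ((∑ b', R a b') * (∑ a', R a' b)));
    (∀ f, Q f = (∏ i, Qi i (f i)) *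
        ∏ p ∈ E, Qij p.1 p.2 (f p.1) (f p.2) / (Qi p.1 (f p.1) * Qi p.2 (f p.2))) →
    ((∑ f, Phat f * Real.log (Phat f / Q f)) + (-∑ f, Phat f * Real.log (Phat f))
        ≥ (∑ i, H (Pi i)) - ∑ p ∈ E, MI2 (fun a b => Pij p.1 p.2 a b)) ∧
    ((∀ i a, Qi i a = Pi i a) →
      (∀ p ∈ E, ∀ a b, Qij p.1 p.2 a b = Pij p.1 p.2 a b) →
      (∑ f, Phat f * Real.log (Phat f / Q f)) + (-∑ f, Phat f * Real.log (Phat f))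
        = (∑ i, H (Pi i)) - ∑ p ∈ E, MI2 (fun a b => Pij p.1 p.2 a b)) := by
  intro Qi Qij Pi Pij H MI2 hQ
  have hQi : Qi = marg1 Q := rfl
  have hQij : Qij = marg2 Q := rfl
  have hPi : Pi = marg1 Phat := rfl
  have hPij : Pij = marg2 Phat := rfl
  have hHdef : H = fun r : X → ℝ => -∑ a, r a * Real.log (r a) := rfl
  have hMIdef : MI2 = fun R : X → X → ℝ =>
      ∑ a, ∑ b, R a b * Real.log (R a b / ((∑ b', R a b') * (∑ a', R a' b))) := rfl
  simp only [hQi, hQij, hPi, hPij, hHdef, hMIdef] at hQ ⊢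
  -- Step 1 : LHS = -∑ Phat log Q
  have hE1 : (∑ f, Phat f * Real.log (Phat f / Q f)) + (-∑ f, Phat f * Real.log (Phat f))
      = -∑ f, Phat f * Real.log (Q f) := by
    have hterm : ∀ f, Phat f * Real.log (Phat f / Q f) - Phat f * Real.log (Phat f)
        = -(Phat f * Real.log (Q f)) := by
      intro f
      rcases eq_or_lt_of_le (hPnn f) with h0 | h0
      · rw [← h0]; ring
      · rw [Real.log_div h0.ne' (hQpos f).ne']; ring
    calc (∑ f, Phat f * Real.log (Phat f / Q f)) + (-∑ f, Phat f * Real.log (Phat f))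
        = ∑ f, (Phat f * Real.log (Phat f / Q f) - Phat f * Real.log (Phat f)) := by
          rw [Finset.sum_sub_distrib]; ring
      _ = ∑ f, -(Phat f * Real.log (Q f)) := Finset.sum_congr rfl fun f _ => hterm f
      _ = -∑ f, Phat f * Real.log (Q f) := Finset.sum_neg_distrib _
  -- positivity of Q marginals
  have hm1Q : ∀ (i : Fin d) (a : X), 0 < marg1 Q i a := by
    intro i a
    apply Finset.sum_pos'
    · intro f _
      by_cases h : f i = a <;> simp [h, (hQpos f).le]
    · exact ⟨fun _ => a, Finset.mem_univ _, by simp [hQpos]⟩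
  have hm2Q : ∀ (i j : Fin d), i ≠ j → ∀ (a b : X), 0 < marg2 Q i j a b := by
    intro i j hij a b
    apply Finset.sum_pos'
    · intro f _
      by_cases h : f i = a ∧ f j = b <;> simp [h, (hQpos f).le]
    · refine ⟨fun t => if t = i then a else b, Finset.mem_univ _, ?_⟩
      rw [if_pos (show (if i = i then a else b) = a ∧ (if j = i then a else b) = b by
        rw [if_pos rfl, if_neg (Ne.symm hij)]; exact ⟨rfl, rfl⟩)]
      exact hQpos _
  -- pointwise log expansion of Q
  have hlogQ : ∀ f : Fin d → X, Real.log (Q f)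
      = (∑ i, Real.log (marg1 Q i (f i)))
        + ∑ p ∈ E, (Real.log (marg2 Q p.1 p.2 (f p.1) (f p.2))
            - Real.log (marg1 Q p.1 (f p.1)) - Real.log (marg1 Q p.2 (f p.2))) := by
    intro f
    rw [hQ f]
    have hterm : ∀ p ∈ E, (0:ℝ) < marg2 Q p.1 p.2 (f p.1) (f p.2)
        / (marg1 Q p.1 (f p.1) * marg1 Q p.2 (f p.2)) := fun p hp =>
      div_pos (hm2Q _ _ (hE p hp) _ _) (mul_pos (hm1Q _ _) (hm1Q _ _))
    have h1 : (∏ i, marg1 Q i (f i)) ≠ 0 :=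
      (Finset.prod_pos (fun i _ => hm1Q i (f i))).ne'
    have h2 : (∏ p ∈ E, marg2 Q p.1 p.2 (f p.1) (f p.2)
        / (marg1 Q p.1 (f p.1) * marg1 Q p.2 (f p.2))) ≠ 0 := (Finset.prod_pos hterm).ne'
    rw [Real.log_mul h1 h2, Real.log_prod (fun i _ => (hm1Q i (f i)).ne'),
        Real.log_prod (fun p hp => (hterm p hp).ne')]
    congr 1
    refine Finset.sum_congr rfl fun p hp => ?_
    rw [Real.log_div (hm2Q _ _ (hE p hp) _ _).ne' (mul_pos (hm1Q _ _) (hm1Q _ _)).ne',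
        Real.log_mul (hm1Q _ _).ne' (hm1Q _ _).ne']
    ring
  -- generic expansion of ∑ ν log Q
  have hexpand : ∀ ν : (Fin d → X) → ℝ,
      ∑ f, ν f * Real.log (Q f)
        = (∑ i, ∑ a, marg1 ν i a * Real.log (marg1 Q i a))
          + ∑ p ∈ E, ((∑ a, ∑ b, marg2 ν p.1 p.2 a b * Real.log (marg2 Q p.1 p.2 a b))
              - (∑ a, marg1 ν p.1 a * Real.log (marg1 Q p.1 a))
              - (∑ a, marg1 ν p.2 a * Real.log (marg1 Q p.2 a))) := by
    intro ν
    calc ∑ f, ν f * Real.log (Q f)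
        = ∑ f, ((∑ i, ν f * Real.log (marg1 Q i (f i)))
            + ∑ p ∈ E, (ν f * Real.log (marg2 Q p.1 p.2 (f p.1) (f p.2))
              - ν f * Real.log (marg1 Q p.1 (f p.1))
              - ν f * Real.log (marg1 Q p.2 (f p.2)))) := by
          refine Finset.sum_congr rfl fun f _ => ?_
          rw [hlogQ f, mul_add, Finset.mul_sum, Finset.mul_sum]
          congr 1
          exact Finset.sum_congr rfl fun p _ => by ring
      _ = (∑ f, ∑ i, ν f * Real.log (marg1 Q i (f i)))
          + ∑ f, ∑ p ∈ E, (ν f * Real.log (marg2 Q p.1 p.2 (f p.1) (f p.2))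
              - ν f * Real.log (marg1 Q p.1 (f p.1))
              - ν f * Real.log (marg1 Q p.2 (f p.2))) := Finset.sum_add_distrib
      _ = (∑ i, ∑ a, marg1 ν i a * Real.log (marg1 Q i a))
          + ∑ p ∈ E, ((∑ a, ∑ b, marg2 ν p.1 p.2 a b * Real.log (marg2 Q p.1 p.2 a b))
              - (∑ a, marg1 ν p.1 a * Real.log (marg1 Q p.1 a))
              - (∑ a, marg1 ν p.2 a * Real.log (marg1 Q p.2 a))) := by
          congr 1
          · rw [Finset.sum_comm]
            exact Finset.sum_congr rfl fun i _ =>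
              (exp_one (μ := ν) i (fun a => Real.log (marg1 Q i a))).symm
          · rw [Finset.sum_comm]
            refine Finset.sum_congr rfl fun p hp => ?_
            rw [Finset.sum_sub_distrib, Finset.sum_sub_distrib]
            rw [exp_two (μ := ν) p.1 p.2 (fun a b => Real.log (marg2 Q p.1 p.2 a b)),
              exp_one (μ := ν) p.1 (fun a => Real.log (marg1 Q p.1 a)),
              exp_one (μ := ν) p.2 (fun a => Real.log (marg1 Q p.2 a))]
  -- MI2 identity
  have hMIeq : ∀ i j : Fin d,
      (∑ a, ∑ b, marg2 Phat i j a b * Real.log (marg2 Phat i j a b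
          / ((∑ b', marg2 Phat i j a b') * (∑ a', marg2 Phat i j a' b))))
      = (∑ a, ∑ b, marg2 Phat i j a b * Real.log (marg2 Phat i j a b))
        - (∑ a, marg1 Phat i a * Real.log (marg1 Phat i a))
        - (∑ b, marg1 Phat j b * Real.log (marg1 Phat j b)) := by
    intro i j
    rw [← mi_split2 hPnn i j]
    refine Finset.sum_congr rfl fun a _ => Finset.sum_congr rfl fun b _ => ?_
    rw [sum_marg2_right, sum_marg2_left]
  constructor
  · -- the inequality
    rw [ge_iff_le, hE1]
    -- graph setup
    have hconn : (SimpleGraph.fromEdgeSet ((fun p : Fin d × Fin d => s(p.1, p.2)) '' ↑E)).Connected :=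
      htree.isConnected
    set G := SimpleGraph.fromEdgeSet ((fun p : Fin d × Fin d => s(p.1, p.2)) '' ↑E) with hGdef
    obtain ⟨r⟩ := hconn.nonempty
    haveI : NeZero d := ⟨r.pos.ne'⟩
    have hpar' : ∀ v : Fin d, ∃ u, v ≠ r → (G.Adj u v ∧ G.dist r u + 1 = G.dist r v) := by
      intro v
      by_cases h : v = r
      · exact ⟨r, fun hc => absurd h hc⟩
      · obtain ⟨u, hu⟩ := exists_lower_neighbor hconn h
        exact ⟨u, fun _ => hu⟩
    choose par hparspec using hpar'
    set σp : Equiv.Perm (Fin d) := Tuple.sort (fun v => G.dist r v) with hσp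
    have hmono : Monotone ((fun v => G.dist r v) ∘ σp) := Tuple.monotone_sort _
    have hσ0 : σp 0 = r := by
      have h0 : G.dist r (σp 0) ≤ G.dist r (σp (σp.symm r)) := by
        have hle : (0 : Fin d) ≤ σp.symm r := by
          rw [Fin.le_def]; exact Nat.zero_le _
        exact hmono hle
      rw [Equiv.apply_symm_apply, SimpleGraph.dist_self] at h0
      have h2 : G.dist r (σp 0) = 0 := Nat.le_zero.mp h0
      exact ((hconn.dist_eq_zero_iff).mp h2).symm
    set pr : Fin d → Fin d := fun k => σp.symm (par (σp k)) with hprdef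
    have hσpr : ∀ k, σp (pr k) = par (σp k) := fun k => Equiv.apply_symm_apply _ _
    have hk0r : ∀ k : Fin d, k ≠ 0 → σp k ≠ r := fun k hk h =>
      hk (σp.injective (by rw [h, hσ0]))
    have hlvl : ∀ k, k ≠ 0 → G.dist r (σp (pr k)) + 1 = G.dist r (σp k) := fun k hk => by
      rw [hσpr]; exact (hparspec (σp k) (hk0r k hk)).2
    have hadjk : ∀ k, k ≠ 0 → G.Adj (σp (pr k)) (σp k) := fun k hk => by
      rw [hσpr]; exact (hparspec (σp k) (hk0r k hk)).1
    have hprlt : ∀ k, k ≠ 0 → pr k < k := by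
      intro k hk
      by_contra hcon
      push_neg at hcon
      have h1 : G.dist r (σp k) ≤ G.dist r (σp (pr k)) := hmono hcon
      have h2 := hlvl k hk
      omega
    have hF5 : ∀ p ∈ E, ∃ k : Fin d, k ≠ 0 ∧
        ((p.1 = σp k ∧ p.2 = σp (pr k)) ∨ (p.1 = σp (pr k) ∧ p.2 = σp k)) := by
      intro p hp
      have hadjp : G.Adj p.1 p.2 := by
        rw [hGdef, SimpleGraph.fromEdgeSet_adj]
        exact ⟨⟨p, Finset.mem_coe.mpr hp, rfl⟩, hE p hp⟩
      have hne := no_same_level htree r hadjp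
      have ht1 : G.dist r p.2 ≤ G.dist r p.1 + 1 := by
        have hd1 : G.dist p.1 p.2 = 1 := SimpleGraph.dist_eq_one_iff_adj.mpr hadjp
        have := hconn.dist_triangle (u := r) (v := p.1) (w := p.2)
        omega
      have ht2 : G.dist r p.1 ≤ G.dist r p.2 + 1 := by
        have hd2 : G.dist p.2 p.1 = 1 := SimpleGraph.dist_eq_one_iff_adj.mpr hadjp.symm
        have := hconn.dist_triangle (u := r) (v := p.2) (w := p.1)
        omega
      rcases lt_or_gt_of_ne hne with hlt | hgt
      · have hl12 : G.dist r p.1 + 1 = G.dist r p.2 := by omega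
        have hp2r : p.2 ≠ r := by
          intro h
          rw [h, SimpleGraph.dist_self] at hl12
          omega
        have hk : σp (σp.symm p.2) = p.2 := Equiv.apply_symm_apply _ _
        have hk0 : σp.symm p.2 ≠ 0 := fun h => hp2r (by rw [← hk, h, hσ0])
        have hadj1 : G.Adj (σp (pr (σp.symm p.2))) p.2 := by
          have := hadjk _ hk0
          rwa [hk] at this
        have hlvl1 : G.dist r (σp (pr (σp.symm p.2))) + 1 = G.dist r p.2 := by
          have := hlvl _ hk0
          rwa [hk] at this
        have hu : σp (pr (σp.symm p.2)) = p.1 :=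
          unique_lower htree r hadj1 hadjp hlvl1 hl12
        exact ⟨σp.symm p.2, hk0, Or.inr ⟨hu.symm, hk.symm⟩⟩
      · have hl12 : G.dist r p.2 + 1 = G.dist r p.1 := by omega
        have hp1r : p.1 ≠ r := by
          intro h
          rw [h, SimpleGraph.dist_self] at hl12
          omega
        have hk : σp (σp.symm p.1) = p.1 := Equiv.apply_symm_apply _ _
        have hk0 : σp.symm p.1 ≠ 0 := fun h => hp1r (by rw [← hk, h, hσ0])
        have hadj1 : G.Adj (σp (pr (σp.symm p.1))) p.1 := by
          have := hadjk _ hk0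
          rwa [hk] at this
        have hlvl1 : G.dist r (σp (pr (σp.symm p.1))) + 1 = G.dist r p.1 := by
          have := hlvl _ hk0
          rwa [hk] at this
        have hu : σp (pr (σp.symm p.1)) = p.2 :=
          unique_lower htree r hadj1 hadjp.symm hlvl1 hl12
        exact ⟨σp.symm p.1, hk0, Or.inl ⟨hk.symm, hu.symm⟩⟩
    -- the junction-tree distribution
    set w : (Fin d → X) → ℝ := Wm σp pr Phat d with hwdef
    have hw0 : ∀ f, 0 ≤ w f := wm_nonneg σp pr hPnn d
    have hwsum : ∑ f, w f = 1 := junction_sum σp pr hPnn hprlt hPsum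
    have hwn : ∀ (i : Fin d) (b : X), marg1 w i b = marg1 Phat i b :=
      junction_node σp pr hPnn hprlt
    have hwe : ∀ k, k ≠ 0 → ∀ a b, marg2 w (σp k) (σp (pr k)) a b
        = marg2 Phat (σp k) (σp (pr k)) a b := fun k hk =>
      junction_edge σp pr hPnn hprlt k hk
    have hmargE : ∀ p ∈ E, ∀ a b, marg2 w p.1 p.2 a b = marg2 Phat p.1 p.2 a b := by
      intro p hp a b
      obtain ⟨k, hk0, hor⟩ := hF5 p hp
      rcases hor with ⟨h1, h2⟩ | ⟨h1, h2⟩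
      · rw [h1, h2, hwe k hk0]
      · rw [h1, h2, marg2_comm (μ := w), hwe k hk0, ← marg2_comm]
    have hDW : 0 ≤ ∑ f, w f * Real.log (w f / Q f) :=
      gibbs w Q hw0 (fun f => (hQpos f).le) (fun f h => absurd h (hQpos f).ne')
        hwsum (le_of_eq hQsum)
    have hsplitW : ∑ f, w f * Real.log (w f / Q f)
        = (∑ f, w f * Real.log (w f)) - ∑ f, w f * Real.log (Q f) :=
      sum_mul_log_div w Q hw0 (fun f _ => (hQpos f).ne')
    have hwexp : ∑ f, w f * Real.log (w f)
        = (∑ a, marg1 Phat (σp 0) a * Real.log (marg1 Phat (σp 0) a))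
          + ∑ k ∈ univ.filter (fun k : Fin d => k ≠ 0),
              ((∑ a, ∑ b, marg2 Phat (σp k) (σp (pr k)) a b
                  * Real.log (marg2 Phat (σp k) (σp (pr k)) a b))
                - (∑ a, marg1 Phat (σp (pr k)) a * Real.log (marg1 Phat (σp (pr k)) a))) := by
      calc ∑ f, w f * Real.log (w f)
          = ∑ f, w f * (Real.log (marg1 Phat (σp 0) (f (σp 0)))
              + ∑ k ∈ univ.filter (fun k : Fin d => k ≠ 0),
                  (Real.log (marg2 Phat (σp k) (σp (pr k)) (f (σp k)) (f (σp (pr k))))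
                    - Real.log (marg1 Phat (σp (pr k)) (f (σp (pr k)))))) :=
            Finset.sum_congr rfl fun f _ => wm_log_expand σp pr hPnn f
        _ = (∑ f, w f * Real.log (marg1 Phat (σp 0) (f (σp 0))))
            + ∑ f, ∑ k ∈ univ.filter (fun k : Fin d => k ≠ 0),
                (w f * Real.log (marg2 Phat (σp k) (σp (pr k)) (f (σp k)) (f (σp (pr k))))
                  - w f * Real.log (marg1 Phat (σp (pr k)) (f (σp (pr k))))) := by
            rw [← Finset.sum_add_distrib]
            refine Finset.sum_congr rfl fun f _ => ?_
            rw [mul_add, Finset.mul_sum]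
            congr 1
            exact Finset.sum_congr rfl fun k _ => by ring
        _ = (∑ a, marg1 Phat (σp 0) a * Real.log (marg1 Phat (σp 0) a))
            + ∑ k ∈ univ.filter (fun k : Fin d => k ≠ 0),
                ((∑ a, ∑ b, marg2 Phat (σp k) (σp (pr k)) a b
                    * Real.log (marg2 Phat (σp k) (σp (pr k)) a b))
                  - (∑ a, marg1 Phat (σp (pr k)) a * Real.log (marg1 Phat (σp (pr k)) a))) := by
            congr 1
            · calc ∑ f, w f * Real.log (marg1 Phat (σp 0) (f (σp 0)))
                  = ∑ a, marg1 w (σp 0) a * Real.log (marg1 Phat (σp 0) a) :=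
                    (exp_one (μ := w) (σp 0) fun a => Real.log (marg1 Phat (σp 0) a)).symm
                _ = ∑ a, marg1 Phat (σp 0) a * Real.log (marg1 Phat (σp 0) a) :=
                    Finset.sum_congr rfl fun a _ => by rw [hwn]
            · rw [Finset.sum_comm]
              refine Finset.sum_congr rfl fun k hk => ?_
              have hk0 : k ≠ 0 := (Finset.mem_filter.mp hk).2
              rw [Finset.sum_sub_distrib]
              congr 1
              · calc ∑ f, w f * Real.log (marg2 Phat (σp k) (σp (pr k)) (f (σp k)) (f (σp (pr k))))
                    = ∑ a, ∑ b, marg2 w (σp k) (σp (pr k)) a b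
                        * Real.log (marg2 Phat (σp k) (σp (pr k)) a b) :=
                      (exp_two (μ := w) _ _
                        fun a b => Real.log (marg2 Phat (σp k) (σp (pr k)) a b)).symm
                  _ = ∑ a, ∑ b, marg2 Phat (σp k) (σp (pr k)) a b
                        * Real.log (marg2 Phat (σp k) (σp (pr k)) a b) :=
                      Finset.sum_congr rfl fun a _ => Finset.sum_congr rfl fun b _ => by
                        rw [hwe k hk0]
              · calc ∑ f, w f * Real.log (marg1 Phat (σp (pr k)) (f (σp (pr k))))
                    = ∑ a, marg1 w (σp (pr k)) a * Real.log (marg1 Phat (σp (pr k)) a) :=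
                      (exp_one (μ := w) _ fun a => Real.log (marg1 Phat (σp (pr k)) a)).symm
                  _ = ∑ a, marg1 Phat (σp (pr k)) a * Real.log (marg1 Phat (σp (pr k)) a) :=
                      Finset.sum_congr rfl fun a _ => by rw [hwn]
    have hwlogQ : ∑ f, w f * Real.log (Q f)
        = (∑ i, ∑ a, marg1 Phat i a * Real.log (marg1 Q i a))
          + ∑ p ∈ E, ((∑ a, ∑ b, marg2 Phat p.1 p.2 a b * Real.log (marg2 Q p.1 p.2 a b))
              - (∑ a, marg1 Phat p.1 a * Real.log (marg1 Q p.1 a))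
              - (∑ a, marg1 Phat p.2 a * Real.log (marg1 Q p.2 a))) := by
      rw [hexpand w]
      congr 1
      · exact Finset.sum_congr rfl fun i _ => Finset.sum_congr rfl fun a _ => by rw [hwn]
      · refine Finset.sum_congr rfl fun p hp => ?_
        congr 1
        · congr 1
          · exact Finset.sum_congr rfl fun a _ => Finset.sum_congr rfl fun b _ => by
              rw [hmargE p hp]
          · exact Finset.sum_congr rfl fun a _ => by rw [hwn]
        · exact Finset.sum_congr rfl fun a _ => by rw [hwn]
    have hvsum : ∑ i, (∑ a, marg1 Phat i a * Real.log (marg1 Phat i a))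
        = (∑ a, marg1 Phat (σp 0) a * Real.log (marg1 Phat (σp 0) a))
          + ∑ k ∈ univ.filter (fun k : Fin d => k ≠ 0),
              (∑ a, marg1 Phat (σp k) a * Real.log (marg1 Phat (σp k) a)) := by
      have h1 : ∑ k, (∑ a, marg1 Phat (σp k) a * Real.log (marg1 Phat (σp k) a))
          = ∑ i, (∑ a, marg1 Phat i a * Real.log (marg1 Phat i a)) :=
        Equiv.sum_comp σp (fun i => ∑ a, marg1 Phat i a * Real.log (marg1 Phat i a))
      rw [← h1]
      rw [← Finset.sum_filter_add_sum_filter_not univ (fun k : Fin d => k ≠ 0)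
        (fun k => ∑ a, marg1 Phat (σp k) a * Real.log (marg1 Phat (σp k) a))]
      have h2 : univ.filter (fun k : Fin d => ¬ k ≠ 0) = {0} := by
        ext k; simp
      rw [h2, Finset.sum_singleton]
      ring
    have hMIpos : ∀ i j : Fin d,
        0 ≤ (∑ a, ∑ b, marg2 Phat i j a b * Real.log (marg2 Phat i j a b))
            - (∑ a, marg1 Phat i a * Real.log (marg1 Phat i a))
            - (∑ b, marg1 Phat j b * Real.log (marg1 Phat j b)) := by
      intro i j
      rw [← mi_split2 hPnn i j]
      exact mi_nonneg hPnn hPsum i j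
    have hsel : ∀ k : Fin d, ∃ p : Fin d × Fin d, k ≠ 0 →
        (p ∈ E ∧ s(p.1, p.2) = s(σp k, σp (pr k))) := by
      intro k
      by_cases hk : k = 0
      · exact ⟨(0,0), fun h => absurd hk h⟩
      · have hadj := hadjk k hk
        rw [hGdef, SimpleGraph.fromEdgeSet_adj] at hadj
        obtain ⟨⟨p, hpE, hps⟩, hne2⟩ := hadj
        exact ⟨p, fun _ => ⟨Finset.mem_coe.mp hpE, hps.trans Sym2.eq_swap⟩⟩
    choose sel hsel2 using hsel
    have hselE : ∀ k ∈ univ.filter (fun k : Fin d => k ≠ 0), sel k ∈ E :=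
      fun k hk => (hsel2 k (Finset.mem_filter.mp hk).2).1
    have hselS : ∀ k ∈ univ.filter (fun k : Fin d => k ≠ 0),
        s((sel k).1, (sel k).2) = s(σp k, σp (pr k)) :=
      fun k hk => (hsel2 k (Finset.mem_filter.mp hk).2).2
    have hinj : ∀ k ∈ univ.filter (fun k : Fin d => k ≠ 0),
        ∀ k' ∈ univ.filter (fun k : Fin d => k ≠ 0), sel k = sel k' → k = k' := by
      intro k hk k' hk' he
      have h1 := hselS k hk
      have h2 := hselS k' hk'
      rw [he] at h1
      have h3 := h1.symm.trans h2
      rw [Sym2.eq_iff] at h3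
      rcases h3 with ⟨ha, hb⟩ | ⟨ha, hb⟩
      · exact σp.injective ha
      · exfalso
        have e1 : k = pr k' := σp.injective ha
        have e2 : pr k = k' := σp.injective hb
        have l1 := hprlt k (Finset.mem_filter.mp hk).2
        have l2 := hprlt k' (Finset.mem_filter.mp hk').2
        rw [← e1] at l2
        rw [e2] at l1
        exact absurd l1 (not_lt.mpr (le_of_lt l2))
    have hswap : ∀ k ∈ univ.filter (fun k : Fin d => k ≠ 0),
        ((∑ a, ∑ b, marg2 Phat (σp k) (σp (pr k)) a b
            * Real.log (marg2 Phat (σp k) (σp (pr k)) a b))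
          - (∑ a, marg1 Phat (σp k) a * Real.log (marg1 Phat (σp k) a))
          - (∑ a, marg1 Phat (σp (pr k)) a * Real.log (marg1 Phat (σp (pr k)) a)))
        = ((∑ a, ∑ b, marg2 Phat (sel k).1 (sel k).2 a b
            * Real.log (marg2 Phat (sel k).1 (sel k).2 a b))
          - (∑ a, marg1 Phat (sel k).1 a * Real.log (marg1 Phat (sel k).1 a))
          - (∑ a, marg1 Phat (sel k).2 a * Real.log (marg1 Phat (sel k).2 a))) := by
      intro k hk
      have hs := hselS k hk
      rw [Sym2.eq_iff] at hs
      rcases hs with ⟨ha, hb⟩ | ⟨ha, hb⟩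
      · rw [ha, hb]
      · rw [ha, hb]
        rw [n2_symm (μ := Phat) (σp (pr k)) (σp k) Real.log]
        ring
    have hMIle : ∑ k ∈ univ.filter (fun k : Fin d => k ≠ 0),
        ((∑ a, ∑ b, marg2 Phat (σp k) (σp (pr k)) a b
            * Real.log (marg2 Phat (σp k) (σp (pr k)) a b))
          - (∑ a, marg1 Phat (σp k) a * Real.log (marg1 Phat (σp k) a))
          - (∑ a, marg1 Phat (σp (pr k)) a * Real.log (marg1 Phat (σp (pr k)) a)))
        ≤ ∑ p ∈ E, ((∑ a, ∑ b, marg2 Phat p.1 p.2 a b * Real.log (marg2 Phat p.1 p.2 a b))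
          - (∑ a, marg1 Phat p.1 a * Real.log (marg1 Phat p.1 a))
          - (∑ a, marg1 Phat p.2 a * Real.log (marg1 Phat p.2 a))) := by
      rw [Finset.sum_congr rfl hswap]
      have himg := Finset.sum_image (g := sel)
        (f := fun p : Fin d × Fin d =>
          (∑ a, ∑ b, marg2 Phat p.1 p.2 a b * Real.log (marg2 Phat p.1 p.2 a b))
            - (∑ a, marg1 Phat p.1 a * Real.log (marg1 Phat p.1 a))
            - (∑ a, marg1 Phat p.2 a * Real.log (marg1 Phat p.2 a)))
        hinj
      rw [← himg]
      refine Finset.sum_le_sum_of_subset_of_nonneg ?_ ?_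
      · intro p hp
        obtain ⟨k, hk, rfl⟩ := Finset.mem_image.mp hp
        exact hselE k hk
      · intro p _ _
        exact hMIpos p.1 p.2
    have hsplitk : ∑ k ∈ univ.filter (fun k : Fin d => k ≠ 0),
        ((∑ a, ∑ b, marg2 Phat (σp k) (σp (pr k)) a b
            * Real.log (marg2 Phat (σp k) (σp (pr k)) a b))
          - (∑ a, marg1 Phat (σp (pr k)) a * Real.log (marg1 Phat (σp (pr k)) a)))
        = (∑ k ∈ univ.filter (fun k : Fin d => k ≠ 0),
            ((∑ a, ∑ b, marg2 Phat (σp k) (σp (pr k)) a b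
                * Real.log (marg2 Phat (σp k) (σp (pr k)) a b))
              - (∑ a, marg1 Phat (σp k) a * Real.log (marg1 Phat (σp k) a))
              - (∑ a, marg1 Phat (σp (pr k)) a * Real.log (marg1 Phat (σp (pr k)) a))))
          + ∑ k ∈ univ.filter (fun k : Fin d => k ≠ 0),
              (∑ a, marg1 Phat (σp k) a * Real.log (marg1 Phat (σp k) a)) := by
      rw [← Finset.sum_add_distrib]
      exact Finset.sum_congr rfl fun k _ => by ring
    -- final assembly
    rw [hexpand Phat]
    rw [Finset.sum_neg_distrib]
    rw [Finset.sum_congr rfl (fun (p : Fin d × Fin d) (_ : p ∈ E) => hMIeq p.1 p.2)]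
    linarith [hDW, hsplitW, hwexp, hwlogQ, hvsum, hMIle, hsplitk]
  · -- the equality case
    intro hQP1 hQP2
    rw [hE1, hexpand Phat]
    have e1 : ∀ i : Fin d, (∑ a, marg1 Phat i a * Real.log (marg1 Q i a))
        = ∑ a, marg1 Phat i a * Real.log (marg1 Phat i a) := fun i =>
      Finset.sum_congr rfl fun a _ => by rw [hQP1 i a]
    have e2 : ∑ p ∈ E, ((∑ a, ∑ b, marg2 Phat p.1 p.2 a b * Real.log (marg2 Q p.1 p.2 a b))
          - (∑ a, marg1 Phat p.1 a * Real.log (marg1 Q p.1 a))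
          - (∑ a, marg1 Phat p.2 a * Real.log (marg1 Q p.2 a)))
        = ∑ p ∈ E, ((∑ a, ∑ b, marg2 Phat p.1 p.2 a b * Real.log (marg2 Phat p.1 p.2 a b))
          - (∑ a, marg1 Phat p.1 a * Real.log (marg1 Phat p.1 a))
          - (∑ a, marg1 Phat p.2 a * Real.log (marg1 Phat p.2 a))) := by
      refine Finset.sum_congr rfl fun p hp => ?_
      rw [e1 p.1, e1 p.2]
      congr 1
      congr 1
      exact Finset.sum_congr rfl fun a _ => Finset.sum_congr rfl fun b _ => by
        rw [hQP2 p hp a b]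
    rw [Finset.sum_congr rfl fun i _ => e1 i, e2,
      Finset.sum_congr rfl fun p (hp : p ∈ E) => hMIeq p.1 p.2]
    rw [Finset.sum_neg_distrib]
    ring

end Main
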